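/- Let σ² > 0, L ≥ 2 an integer, c₁, …, c_L > 0, c₀ = (Σ_{ℓ=1}^L 1/c_ℓ)⁻¹, and γ > σ²·max(√c₁, …, √c_L). Let Υ be the (L+1)×(L+1) real symmetric matrix indexed by 0, …, L with diagonal entries Υ_{ℓℓ} = c_ℓγ²(γ + σ²)²/(γ² − σ⁴c_ℓ) for ℓ = 0, …, L, off-diagonal entries Υ_{0ℓ} = Υ_{ℓ0} = c₀γ²(γ + σ²)²/(γ² − σ⁴c₀) for ℓ = 1, …, L, and all other entries zero. Let H̃ be the L×(L+1) real matrix whose ℓ-th row (ℓ = 1, …, L) has entry 1 in column 0, entry −1 in column ℓ, and 0 elsewhere. Then Υ is positive definite and H̃ Υ H̃ᵀ is positive definite; in particular H̃ Υ H̃ᵀ is nonsingular. -/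

import Mathlib

open scoped BigOperators

lemma quad_pos_aux (n : ℕ) (d : Fin n → ℝ) (hd : ∀ i, 0 < d i) (a : ℝ)
    (hβ : 0 < a - a ^ 2 * ∑ i, (d i)⁻¹) (x0 : ℝ) (y : Fin n → ℝ)
    (hx : x0 ≠ 0 ∨ ∃ i, y i ≠ 0) :
    0 < a * x0 ^ 2 + 2 * a * x0 * (∑ i, y i) + ∑ i, d i * y i ^ 2 := by
  have key : a * x0 ^ 2 + 2 * a * x0 * (∑ i, y i) + ∑ i, d i * y i ^ 2
      = (∑ i, d i * (y i + a * x0 / d i) ^ 2) + (a - a ^ 2 * ∑ i, (d i)⁻¹) * x0 ^ 2 := by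
    have h1 : ∀ i ∈ Finset.univ, d i * (y i + a * x0 / d i) ^ 2
        = d i * y i ^ 2 + 2 * a * x0 * y i + a ^ 2 * x0 ^ 2 * (d i)⁻¹ := by
      intro i _
      have hne := (hd i).ne'
      field_simp
      ring
    rw [Finset.sum_congr rfl h1, Finset.sum_add_distrib, Finset.sum_add_distrib,
      ← Finset.mul_sum, ← Finset.mul_sum]
    ring
  rw [key]
  rcases eq_or_ne x0 0 with h0 | h0
  · obtain ⟨i, hi⟩ := hx.resolve_left (by simp [h0])
    have hpos : 0 < ∑ i, d i * (y i + a * x0 / d i) ^ 2 := by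
      refine Finset.sum_pos' (fun j _ => mul_nonneg (hd j).le (sq_nonneg _)) ⟨i, Finset.mem_univ i, ?_⟩
      subst h0
      simp only [mul_zero, zero_div, add_zero]
      have : 0 < y i ^ 2 := by positivity
      exact mul_pos (hd i) this
    nlinarith [sq_nonneg x0, mul_nonneg hβ.le (sq_nonneg x0)]
  · have h1 : 0 ≤ ∑ i, d i * (y i + a * x0 / d i) ^ 2 :=
      Finset.sum_nonneg fun i _ => mul_nonneg (hd i).le (sq_nonneg _)
    have h2 : 0 < (a - a ^ 2 * ∑ i, (d i)⁻¹) * x0 ^ 2 := by positivity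
    linarith


/-- for `L ≥ 2`, `c₁, …, c_L > 0`, `c₀ = (Σ 1/c_ℓ)⁻¹` and
`γ > σ²·max(√c₁, …, √c_L)`, the matrix `Υ` is positive definite, `H̃ Υ H̃ᵀ` is positive
definite, and in particular `H̃ Υ H̃ᵀ` is nonsingular. -/
theorem Upsilon_and_HUpsilonHT_posDef (s : ℝ) (hs : 0 < s) (L : ℕ) (hL : 2 ≤ L)
    (c : Fin L → ℝ) (hc : ∀ ℓ, 0 < c ℓ) (γ : ℝ)
    (hγ : ∀ ℓ, s * Real.sqrt (c ℓ) < γ) :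
    ∀ c₀ : ℝ, c₀ = (∑ ℓ, (c ℓ)⁻¹)⁻¹ →
    ∀ cc : Fin (L + 1) → ℝ, cc = Fin.cases c₀ c →
    ∀ Υ : Matrix (Fin (L + 1)) (Fin (L + 1)) ℝ,
      Υ = Matrix.of (fun i j =>
        if i = j then cc i * γ ^ 2 * (γ + s) ^ 2 / (γ ^ 2 - s ^ 2 * cc i)
        else if i = 0 ∨ j = 0 then c₀ * γ ^ 2 * (γ + s) ^ 2 / (γ ^ 2 - s ^ 2 * c₀)
        else 0) →
    ∀ H : Matrix (Fin L) (Fin (L + 1)) ℝ,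
      H = Matrix.of (fun ℓ j => if j = 0 then 1 else if j = ℓ.succ then -1 else 0) →
    Υ.PosDef ∧ (H * Υ * H.transpose).PosDef ∧ (H * Υ * H.transpose).det ≠ 0 := by
  intro c₀ hc₀ cc hcc Υ hΥ H hH
  have hL0 : 0 < L := by omega
  have ℓ₁ : Fin L := ⟨0, hL0⟩
  have hγ0 : 0 < γ := lt_trans (mul_pos hs (Real.sqrt_pos.2 (hc ℓ₁))) (hγ ℓ₁)
  -- squared inequality
  have hγs : 0 < γ + s := by linarith
  have hγc : ∀ ℓ, s ^ 2 * c ℓ < γ ^ 2 := by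
    intro ℓ
    have hsq : Real.sqrt (c ℓ) * Real.sqrt (c ℓ) = c ℓ := Real.mul_self_sqrt (hc ℓ).le
    have h := mul_self_lt_mul_self (mul_nonneg hs.le (Real.sqrt_nonneg _)) (hγ ℓ)
    nlinarith [h, hsq]
  set S : ℝ := ∑ ℓ, (c ℓ)⁻¹ with hS
  have hSpos : 0 < S :=
    Finset.sum_pos (fun ℓ _ => inv_pos.2 (hc ℓ)) ⟨ℓ₁, Finset.mem_univ ℓ₁⟩
  have hc₀pos : 0 < c₀ := hc₀ ▸ inv_pos.2 hSpos
  have hS' : S = c₀⁻¹ := by rw [hc₀, inv_inv]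
  have hc₀le : c₀ ≤ c ℓ₁ := by
    rw [hc₀]
    calc S⁻¹ ≤ ((c ℓ₁)⁻¹)⁻¹ :=
          inv_anti₀ (inv_pos.2 (hc ℓ₁))
            (Finset.single_le_sum (fun ℓ _ => (inv_pos.2 (hc ℓ)).le) (Finset.mem_univ ℓ₁))
      _ = c ℓ₁ := inv_inv _
  have ht₀ : 0 < γ ^ 2 - s ^ 2 * c₀ := by
    have := hγc ℓ₁
    nlinarith [sq_nonneg s]
  have htℓ : ∀ ℓ, 0 < γ ^ 2 - s ^ 2 * c ℓ := fun ℓ => by linarith [hγc ℓ]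
  set K : ℝ := γ ^ 2 * (γ + s) ^ 2 with hK
  have hKpos : 0 < K := mul_pos (pow_pos hγ0 2) (pow_pos hγs 2)
  set a : ℝ := c₀ * γ ^ 2 * (γ + s) ^ 2 / (γ ^ 2 - s ^ 2 * c₀) with ha
  have hapos : 0 < a :=
    div_pos (mul_pos (mul_pos hc₀pos (pow_pos hγ0 2)) (pow_pos hγs 2)) ht₀
  set d : Fin L → ℝ := fun ℓ => c ℓ * γ ^ 2 * (γ + s) ^ 2 / (γ ^ 2 - s ^ 2 * c ℓ) with hd
  have hdpos : ∀ ℓ, 0 < d ℓ := fun ℓ => div_pos (mul_pos (mul_pos (hc ℓ) (pow_pos hγ0 2)) (pow_pos hγs 2)) (htℓ ℓ)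
  -- sum of inverses of d
  have hsum_inv : ∑ ℓ, (d ℓ)⁻¹ = (γ ^ 2 * S - L * s ^ 2) / K := by
    have h1 : ∀ ℓ ∈ Finset.univ, (d ℓ)⁻¹ = (γ ^ 2 * (c ℓ)⁻¹ - s ^ 2) / K := by
      intro ℓ _
      have h2 := (htℓ ℓ).ne'
      have h3 := (hc ℓ).ne'
      rw [hd]
      rw [inv_div, div_eq_div_iff (mul_pos (mul_pos (hc ℓ) (pow_pos hγ0 2)) (pow_pos hγs 2)).ne' hKpos.ne', hK]
      field_simp
    rw [Finset.sum_congr rfl h1, ← Finset.sum_div, Finset.sum_sub_distrib, ← Finset.mul_sum,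
      Finset.sum_const, Finset.card_univ, Fintype.card_fin, nsmul_eq_mul]
  have hβ : 0 < a - a ^ 2 * ∑ ℓ, (d ℓ)⁻¹ := by
    rw [hsum_inv, hS']
    have heq : a - a ^ 2 * ((γ ^ 2 * c₀⁻¹ - L * s ^ 2) / K) =
        c₀ ^ 2 * K * (L - 1) * s ^ 2 / (γ ^ 2 - s ^ 2 * c₀) ^ 2 := by
      rw [ha, hK]
      field_simp
      ring
    rw [heq]
    have hL1 : (1 : ℝ) < (L : ℝ) := by
      have : (2 : ℝ) ≤ (L : ℝ) := by exact_mod_cast hL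
      linarith
    apply div_pos _ (pow_pos ht₀ 2)
    have h1 : (0 : ℝ) < (L : ℝ) - 1 := by linarith
    have := pow_pos hc₀pos 2
    have := pow_pos hs 2
    nlinarith [mul_pos (mul_pos (pow_pos hc₀pos 2) hKpos) (mul_pos h1 (pow_pos hs 2))]
  -- quadratic form identity
  have hquad : ∀ x : Fin (L + 1) → ℝ, dotProduct x (Υ.mulVec x)
      = a * (x 0) ^ 2 + 2 * a * (x 0) * (∑ ℓ : Fin L, x ℓ.succ) + ∑ ℓ : Fin L, d ℓ * (x ℓ.succ) ^ 2 := by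
    intro x
    subst hΥ hcc
    simp only [dotProduct, Matrix.mulVec, Matrix.of_apply, Fin.sum_univ_succ,
      Fin.cases_zero, Fin.cases_succ, Fin.succ_ne_zero, (Fin.succ_ne_zero _).symm,
      Fin.succ_inj, if_true, eq_self_iff_true, or_true, true_or, or_false, false_or,
      if_false, ite_true, ite_false]
    simp only [ite_mul, zero_mul, Finset.sum_ite_eq, Finset.mem_univ, if_true]
    have e1 : ∑ ℓ : Fin L, a * x ℓ.succ = a * ∑ ℓ : Fin L, x ℓ.succ :=
      (Finset.mul_sum _ _ _).symm
    have e2 : ∀ ℓ ∈ Finset.univ, x ℓ.succ *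
        (a * x 0 + c ℓ * γ ^ 2 * (γ + s) ^ 2 / (γ ^ 2 - s ^ 2 * c ℓ) * x ℓ.succ)
        = a * x 0 * x ℓ.succ + d ℓ * x ℓ.succ ^ 2 := by
      intro ℓ _
      rw [hd]
      ring
    rw [e1, Finset.sum_congr rfl e2, Finset.sum_add_distrib, ← Finset.mul_sum]
    ring
  -- Hermitian
  have hherm : Υ.IsHermitian := by
    subst hΥ
    ext i j
    simp only [Matrix.conjTranspose_apply, Matrix.of_apply, star_trivial]
    rcases eq_or_ne i j with h | h
    · subst h; rfl
    · rw [if_neg h, if_neg (Ne.symm h)]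
      by_cases h0 : i = 0 <;> by_cases h1 : j = 0 <;> simp [h0, h1]
  -- nonzero-vector decomposition
  have hnz : ∀ x : Fin (L + 1) → ℝ, x ≠ 0 → x 0 ≠ 0 ∨ ∃ ℓ : Fin L, x ℓ.succ ≠ 0 := by
    intro x hx
    by_contra hcon
    push_neg at hcon
    apply hx
    funext i
    refine Fin.cases hcon.1 (fun ℓ => hcon.2 ℓ) i
  have hΥpd : Υ.PosDef := by
    refine Matrix.posDef_iff_dotProduct_mulVec.2 ⟨hherm, fun x hx => ?_⟩
    rw [star_trivial, hquad x]
    exact quad_pos_aux L d hdpos a hβ (x 0) (fun ℓ => x ℓ.succ) (hnz x hx)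
  refine ⟨hΥpd, ?_⟩
  -- conjTranspose of H is its transpose (real entries)
  have hHct : H.conjTranspose = H.transpose := by
    ext i j
    simp [Matrix.conjTranspose_apply]
  have hherm2 : (H * Υ * H.transpose).IsHermitian := by
    rw [← hHct]
    exact Matrix.isHermitian_mul_mul_conjTranspose H hherm
  have hHpd : (H * Υ * H.transpose).PosDef := by
    refine Matrix.posDef_iff_dotProduct_mulVec.2 ⟨hherm2, fun y hy => ?_⟩
    have hz : ∀ ℓ₀ : Fin L, (H.transpose.mulVec y) ℓ₀.succ = - y ℓ₀ := by
      intro ℓ₀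
      subst hH
      simp only [Matrix.mulVec, dotProduct, Matrix.transpose_apply, Matrix.of_apply,
        Fin.succ_ne_zero, if_false, Fin.succ_inj]
      rw [Finset.sum_eq_single ℓ₀]
      · simp
      · intro b _ hb
        rw [if_neg (fun hh => hb hh.symm), zero_mul]
      · intro hmem; exact absurd (Finset.mem_univ ℓ₀) hmem
    have hzne : H.transpose.mulVec y ≠ 0 := by
      intro h0
      apply hy
      funext ℓ₀
      have := hz ℓ₀
      rw [h0] at this
      simpa using this.symm
    have hcalc : dotProduct (star y) ((H * Υ * H.transpose).mulVec y)
        = dotProduct (star (H.transpose.mulVec y)) (Υ.mulVec (H.transpose.mulVec y)) := by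
      rw [star_trivial, star_trivial, ← Matrix.mulVec_mulVec, ← Matrix.mulVec_mulVec,
        Matrix.dotProduct_mulVec, ← Matrix.mulVec_transpose]
    rw [hcalc]
    exact (Matrix.posDef_iff_dotProduct_mulVec.1 hΥpd).2 hzne
  exact ⟨hHpd, hHpd.det_pos.ne'⟩
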